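/- arXiv:1903.09780 — 6 statements merged into one kernel-verified Lean document; each statement's English description precedes it below -/
import Mathlib

section
/- For any ε ∈ [-1,1], the function x ↦ sinh(x) / ((ε + cosh(x)) · x) is strictly monotone decreasing on (0, ∞). -/
open Real

lemma aux_sinh_lt (x : ℝ) (hx : 0 < x) : Real.sinh x < x * Real.cosh x := by
  have h : StrictMonoOn (fun x : ℝ => x * Real.cosh x - Real.sinh x) (Set.Ici 0) := by
    apply strictMonoOn_of_deriv_pos (convex_Ici 0)
    · fun_prop
    · intro y hy
      rw [interior_Ici] at hy
      have : HasDerivAt (fun x : ℝ => x * Real.cosh x - Real.sinh x)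
          (1 * Real.cosh y + y * Real.sinh y - Real.cosh y) y :=
        ((hasDerivAt_id y).mul (Real.hasDerivAt_cosh y)).sub (Real.hasDerivAt_sinh y)
      rw [this.deriv]
      have hy' : (0:ℝ) < y := hy
      have h1 : 0 < Real.sinh y := Real.sinh_pos_iff.2 hy'
      nlinarith [mul_pos hy' h1]
  have := h (Set.self_mem_Ici) (le_of_lt hx : (0:ℝ) ≤ x) hx
  simp at this
  linarith

/-- For any ε ∈ [-1,1], the function x ↦ sinh x / ((ε + cosh x) · x) is strictly
monotone decreasing on (0, ∞). -/
theorem stmt_0 (ε : ℝ) (hε : ε ∈ Set.Icc (-1 : ℝ) 1) :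
    StrictAntiOn (fun x : ℝ => Real.sinh x / ((ε + Real.cosh x) * x)) (Set.Ioi 0) := by
  obtain ⟨hε1, hε2⟩ := hε
  have hden : ∀ x : ℝ, x ∈ Set.Ioi (0:ℝ) → 0 < (ε + Real.cosh x) * x := by
    intro x hx
    have h1 : (1:ℝ) < Real.cosh x := Real.one_lt_cosh.2 (ne_of_gt hx)
    have : 0 < ε + Real.cosh x := by linarith
    exact mul_pos this hx
  apply strictAntiOn_of_deriv_neg (convex_Ioi 0)
  · apply ContinuousOn.div
    · fun_prop
    · fun_prop
    · intro x hx; exact ne_of_gt (hden x hx)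
  · intro x hx
    rw [interior_Ioi] at hx
    have hD := hden x hx
    have hd : HasDerivAt (fun x : ℝ => (ε + Real.cosh x) * x)
        ((0 + Real.sinh x) * x + (ε + Real.cosh x) * 1) x :=
      ((hasDerivAt_const x ε).add (Real.hasDerivAt_cosh x)).mul (hasDerivAt_id x)
    have hf : HasDerivAt (fun x : ℝ => Real.sinh x / ((ε + Real.cosh x) * x))
        ((Real.cosh x * ((ε + Real.cosh x) * x) -
          Real.sinh x * ((0 + Real.sinh x) * x + (ε + Real.cosh x) * 1)) /
          ((ε + Real.cosh x) * x) ^ 2) x :=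
      (Real.hasDerivAt_sinh x).div hd (ne_of_gt hD)
    rw [hf.deriv]
    apply div_neg_of_neg_of_pos _ (by positivity)
    have hx' : (0:ℝ) < x := hx
    have h1 : Real.sinh x < x * Real.cosh x := aux_sinh_lt x hx
    have h2 : x < Real.sinh x := Real.self_lt_sinh_iff.2 hx
    have h3 : (1:ℝ) ≤ Real.cosh x := Real.one_le_cosh x
    have h4 : Real.cosh x ^ 2 - Real.sinh x ^ 2 = 1 := Real.cosh_sq_sub_sinh_sq x
    have h5 : x * Real.cosh x ^ 2 - x * Real.sinh x ^ 2 = x := by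
      have := congrArg (x * ·) h4
      simp only [mul_sub, mul_one] at this
      linarith
    nlinarith [mul_le_mul_of_nonneg_right hε2 (by linarith : (0:ℝ) ≤ x * Real.cosh x - Real.sinh x), mul_pos (by linarith : (0:ℝ) < Real.sinh x - x) (by linarith : (0:ℝ) < 1 + Real.cosh x)]
end

section
/- For all x ≥ 0 and t ≥ 0, (1/(2π)) ∫₀^{2π} 1/(1 + x·(t·(cos k + 1) + 1)²) dk = (((2t+1)²x+1)^{1/2} + (x+1)^{1/2}) / (√2 · (x+1)^{1/2} · ((2t+1)²x+1)^{1/2} · ((x+1)^{1/2}·((2t+1)²x+1)^{1/2} + (2t+1)x + 1)^{1/2}). -/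
open Real MeasureTheory Set Filter Topology


lemma image_two_arctan : (fun u : ℝ => 2 * Real.arctan u) '' Set.Ioi 0 = Set.Ioo 0 Real.pi := by
  ext k
  simp only [Set.mem_image, Set.mem_Ioi, Set.mem_Ioo]
  constructor
  · rintro ⟨u, hu, rfl⟩
    have h1 : 0 < Real.arctan u := by
      have := Real.arctan_strictMono (show (0:ℝ) < u from hu)
      simpa [Real.arctan_zero] using this
    have h2 : Real.arctan u < Real.pi / 2 := Real.arctan_lt_pi_div_two u
    exact ⟨by linarith, by linarith⟩
  · rintro ⟨hk0, hkπ⟩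
    refine ⟨Real.tan (k/2), Real.tan_pos_of_pos_of_lt_pi_div_two (by linarith) (by linarith), ?_⟩
    rw [Real.arctan_tan (by linarith) (by linarith)]
    ring


lemma hasDeriv_F (α p q r : ℝ) (hα : 0 < α) (hp : 0 < p) (hq : 0 < q) (hr : 0 < r)
    (hrp : r^2 + p^2 = 4*q) (s : ℝ)
    (hu : 0 < s^2 + p*s + q) (hv : 0 < s^2 - p*s + q) :
    HasDerivAt (fun y => (2/α) * ((1-q)/(2*p*q)/2 * (Real.log (y^2+p*y+q) - Real.log (y^2-p*y+q))
        + (1+q)/(2*q*r) * (Real.arctan ((2*y+p)/r) + Real.arctan ((2*y-p)/r))))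
      ((2/α) * (1+s^2) / ((s^2+p*s+q)*(s^2-p*s+q))) s := by
  have d1 : HasDerivAt (fun y : ℝ => y^2+p*y+q) (2*s+p) s := by
    simpa using ((hasDerivAt_pow 2 s).add (((hasDerivAt_id s).const_mul p))).add_const q
  have d2 : HasDerivAt (fun y : ℝ => y^2-p*y+q) (2*s-p) s := by
    simpa using ((hasDerivAt_pow 2 s).sub (((hasDerivAt_id s).const_mul p))).add_const q
  have l1 := d1.log hu.ne'
  have l2 := d2.log hv.ne'
  have i1 : HasDerivAt (fun y : ℝ => (2*y+p)/r) (2/r) s := by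
    simpa using (((hasDerivAt_id s).const_mul 2).add_const p).div_const r
  have i2 : HasDerivAt (fun y : ℝ => (2*y-p)/r) (2/r) s := by
    simpa using (((hasDerivAt_id s).const_mul 2).sub_const p).div_const r
  have a1 : HasDerivAt (fun y : ℝ => Real.arctan ((2*y+p)/r))
      (1/(1+((2*s+p)/r)^2) * (2/r)) s := (Real.hasDerivAt_arctan _).comp s i1
  have a2 : HasDerivAt (fun y : ℝ => Real.arctan ((2*y-p)/r))
      (1/(1+((2*s-p)/r)^2) * (2/r)) s := (Real.hasDerivAt_arctan _).comp s i2
  have total := (((l1.sub l2).const_mul ((1-q)/(2*p*q)/2)).add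
      ((a1.add a2).const_mul ((1+q)/(2*q*r)))).const_mul (2/α)
  refine total.congr_deriv ?_
  have h1 : 1+((2*s+p)/r)^2 = 4*(s^2+p*s+q)/r^2 := by
    field_simp
    linear_combination hrp
  have h2 : 1+((2*s-p)/r)^2 = 4*(s^2-p*s+q)/r^2 := by
    field_simp
    linear_combination hrp
  rw [h1, h2]
  have hu' : s * (s + p) + q ≠ 0 := (show 0 < s * (s + p) + q by linarith).ne'
  have hv' : s * (s - p) + q ≠ 0 := (show 0 < s * (s - p) + q by linarith).ne'
  field_simp
  ring


lemma tendsto_F (α p q r : ℝ) (hα : 0 < α) (hp : 0 < p) (hq : 0 < q) (hr : 0 < r)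
    (hu : ∀ s : ℝ, 0 < s^2 + p*s + q) (hv : ∀ s : ℝ, 0 < s^2 - p*s + q) :
    Tendsto (fun y => (2/α) * ((1-q)/(2*p*q)/2 * (Real.log (y^2+p*y+q) - Real.log (y^2-p*y+q))
        + (1+q)/(2*q*r) * (Real.arctan ((2*y+p)/r) + Real.arctan ((2*y-p)/r))))
      atTop (𝓝 ((2/α) * ((1+q)/(2*q*r) * Real.pi))) := by
  have A : Tendsto (fun s:ℝ => p/s) atTop (𝓝 0) := tendsto_const_nhds.div_atTop tendsto_id
  have B : Tendsto (fun s:ℝ => q/s^2) atTop (𝓝 0) :=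
    tendsto_const_nhds.div_atTop (tendsto_pow_atTop two_ne_zero)
  have hratio : Tendsto (fun s => (s^2+p*s+q)/(s^2-p*s+q)) atTop (𝓝 1) := by
    have C : Tendsto (fun s : ℝ => (1+p/s+q/s^2)/(1-p/s+q/s^2)) atTop (𝓝 1) := by
      have h1 : Tendsto (fun s : ℝ => 1+p/s+q/s^2) atTop (𝓝 (1+0+0)) :=
        ((tendsto_const_nhds : Tendsto (fun _:ℝ => (1:ℝ)) atTop (𝓝 1)).add A).add B
      have h2 : Tendsto (fun s : ℝ => 1-p/s+q/s^2) atTop (𝓝 (1-0+0)) :=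
        ((tendsto_const_nhds : Tendsto (fun _:ℝ => (1:ℝ)) atTop (𝓝 1)).sub A).add B
      have := h1.div h2 (by norm_num)
      simpa [Pi.div_def] using this
    refine C.congr' ?_
    filter_upwards [eventually_gt_atTop 0] with s hs
    have hvv : (1:ℝ)-p/s+q/s^2 = (s^2-p*s+q)/s^2 := by field_simp
    have hvv2 : (0:ℝ) < 1-p/s+q/s^2 := hvv ▸ div_pos (hv s) (by positivity)
    rw [div_eq_div_iff hvv2.ne' (hv s).ne']
    field_simp
  have hlog : Tendsto (fun s => Real.log (s^2+p*s+q) - Real.log (s^2-p*s+q)) atTop (𝓝 0) := by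
    have := (Real.continuousAt_log one_ne_zero).tendsto.comp hratio
    rw [Real.log_one] at this
    refine this.congr' ?_
    filter_upwards with s
    exact (Real.log_div (hu s).ne' (hv s).ne')
  have lin1 : Tendsto (fun s : ℝ => (2*s+p)/r) atTop atTop :=
    (tendsto_atTop_add_const_right _ p (tendsto_id.const_mul_atTop two_pos)).atTop_div_const hr
  have lin2 : Tendsto (fun s : ℝ => (2*s-p)/r) atTop atTop := by
    have := (tendsto_atTop_add_const_right atTop (-p)
      (tendsto_id.const_mul_atTop two_pos)).atTop_div_const hr
    refine this.congr (fun s => by simp [sub_eq_add_neg])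
  have at1 : Tendsto (fun s : ℝ => Real.arctan ((2*s+p)/r)) atTop (𝓝 (Real.pi/2)) :=
    (Real.tendsto_arctan_atTop.mono_right nhdsWithin_le_nhds).comp lin1
  have at2 : Tendsto (fun s : ℝ => Real.arctan ((2*s-p)/r)) atTop (𝓝 (Real.pi/2)) :=
    (Real.tendsto_arctan_atTop.mono_right nhdsWithin_le_nhds).comp lin2
  have total := (((hlog.const_mul ((1-q)/(2*p*q)/2)).add
    ((at1.add at2).const_mul ((1+q)/(2*q*r)))).const_mul (2/α))
  have hππ : Real.pi/2 + Real.pi/2 = Real.pi := by ring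
  simpa [hππ] using total

set_option maxHeartbeats 1000000 in
lemma main_case (x t : ℝ) (hx : 0 < x) (ht : 0 < t) :
    (1 / (2 * Real.pi)) * ∫ k in (0 : ℝ)..(2 * Real.pi),
        1 / (1 + x * (t * (Real.cos k + 1) + 1) ^ 2)
      = (Real.sqrt ((2 * t + 1) ^ 2 * x + 1) + Real.sqrt (x + 1)) /
        (Real.sqrt 2 * Real.sqrt (x + 1) * Real.sqrt ((2 * t + 1) ^ 2 * x + 1) *
          Real.sqrt (Real.sqrt (x + 1) * Real.sqrt ((2 * t + 1) ^ 2 * x + 1)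
            + (2 * t + 1) * x + 1)) := by
  have hα : (0:ℝ) < x + 1 := by linarith
  have hγ : (0:ℝ) < (2*t+1)^2*x + 1 := by positivity
  set α := x + 1 with hαd
  set γ := (2*t+1)^2*x + 1 with hγd
  set β := 2 + 2*x*(2*t+1) with hβd
  have hβ : 0 < β := by rw [hβd]; nlinarith
  set q := Real.sqrt (γ/α) with hqd
  have hq : 0 < q := Real.sqrt_pos.2 (div_pos hγ hα)
  have hq2 : α * q^2 = γ := by
    rw [hqd, Real.sq_sqrt (div_pos hγ hα).le]
    field_simp
  have hdisc : β^2 + 16*x*t^2 = 4*α*γ := by rw [hαd, hβd, hγd]; ring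
  have hβq : β < 2*α*q := by nlinarith [mul_pos hα hq, mul_pos hx (mul_pos ht ht)]
  have hβα : β/α < 2*q := (div_lt_iff₀ hα).2 (by linarith)
  have hβα0 : 0 < β/α := div_pos hβ hα
  set p := Real.sqrt (2*q - β/α) with hpd
  have hpin : 0 < 2*q - β/α := by linarith
  have hp : 0 < p := Real.sqrt_pos.2 hpin
  have hp2 : p^2 = 2*q - β/α := Real.sq_sqrt hpin.le
  set r := Real.sqrt (2*q + β/α) with hrd
  have hrin : 0 < 2*q + β/α := by linarith
  have hr : 0 < r := Real.sqrt_pos.2 hrin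
  have hr2 : r^2 = 2*q + β/α := Real.sq_sqrt hrin.le
  have hrp : r^2 + p^2 = 4*q := by rw [hp2, hr2]; ring
  have hu : ∀ s:ℝ, 0 < s^2 + p*s + q := fun s => by nlinarith [sq_nonneg (2*s+p)]
  have hv : ∀ s:ℝ, 0 < s^2 - p*s + q := fun s => by nlinarith [sq_nonneg (2*s-p)]

  -- the integrand
  set f : ℝ → ℝ := fun k => 1 / (1 + x * (t * (Real.cos k + 1) + 1) ^ 2) with hfd
  have hfc : Continuous f := by
    apply Continuous.div continuous_const (by fun_prop)
    intro k
    positivity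
  -- symmetry about π
  have hcos : ∀ k, f (2*Real.pi - k) = f k := fun k => by
    rw [hfd]; simp [Real.cos_sub]
  have h1 := intervalIntegral.integral_comp_sub_left (a := 0) (b := Real.pi) f (2*Real.pi)
  simp only [hcos, sub_zero] at h1
  have hπend : 2*Real.pi - Real.pi = Real.pi := by ring
  rw [hπend] at h1
  have hsplit : (∫ k in (0:ℝ)..(2*Real.pi), f k) = 2 * ∫ k in (0:ℝ)..Real.pi, f k := by
    rw [← intervalIntegral.integral_add_adjacent_intervals (a := (0:ℝ)) (b := Real.pi)
      (c := 2*Real.pi) (hfc.intervalIntegrable _ _) (hfc.intervalIntegrable _ _), ← h1]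
    ring

  -- change of variables k = 2 arctan u
  set g : ℝ → ℝ := fun s => 2*(1+s^2) / ((1+s^2)^2 + x*(s^2+2*t+1)^2) with hgd
  have hinj : Function.Injective (fun u : ℝ => 2 * Real.arctan u) := fun a b h =>
    Real.arctan_injective (mul_left_cancel₀ two_ne_zero h)
  have hsubst : (∫ k in Set.Ioo 0 Real.pi, f k) = ∫ u in Set.Ioi (0:ℝ), g u := by
    rw [← image_two_arctan]
    rw [integral_image_eq_integral_abs_deriv_smul measurableSet_Ioi
      (fun u _ => (show HasDerivAt (fun u : ℝ => 2*Real.arctan u) (2/(1+u^2)) u by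
        simpa [mul_one_div, div_eq_mul_inv] using ((Real.hasDerivAt_arctan u).const_mul 2)).hasDerivWithinAt)
      (hinj.injOn) f]
    refine MeasureTheory.setIntegral_congr_fun measurableSet_Ioi (fun u _ => ?_)
    have h1u : (0:ℝ) < 1 + u^2 := by positivity
    have hc2 : Real.cos (2*Real.arctan u) + 1 = 2/(1+u^2) := by
      rw [Real.cos_two_mul, Real.cos_sq_arctan]
      field_simp
      ring
    rw [abs_of_pos (by positivity), smul_eq_mul, hfd, hgd]
    simp only
    rw [show t * (Real.cos (2*Real.arctan u) + 1) + 1 = t * (2/(1+u^2)) + 1 by rw [hc2]]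
    rw [div_mul_div_comm]
    rw [div_eq_div_iff (by positivity) (by positivity)]
    field_simp
    ring
  -- FTC on (0, ∞)
  have hIoi := MeasureTheory.integral_Ioi_of_hasDerivAt_of_nonneg' (a := (0:ℝ))
    (g := fun y => (2/α) * ((1-q)/(2*p*q)/2 * (Real.log (y^2+p*y+q) - Real.log (y^2-p*y+q))
        + (1+q)/(2*q*r) * (Real.arctan ((2*y+p)/r) + Real.arctan ((2*y-p)/r))))
    (fun s _ => hasDeriv_F α p q r hα hp hq hr hrp s (hu s) (hv s))
    (fun s _ => le_of_lt (div_pos (by positivity) (mul_pos (hu s) (hv s))))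
    (tendsto_F α p q r hα hp hq hr hu hv)
  have hF0 : (2/α) * ((1-q)/(2*p*q)/2 * (Real.log ((0:ℝ)^2+p*0+q) - Real.log ((0:ℝ)^2-p*0+q))
        + (1+q)/(2*q*r) * (Real.arctan ((2*0+p)/r) + Real.arctan ((2*(0:ℝ)-p)/r))) = 0 := by
    norm_num [neg_div, Real.arctan_neg]
  beta_reduce at hIoi
  rw [hF0, sub_zero] at hIoi
  have hαuv : ∀ s:ℝ, α*((s^2+p*s+q)*(s^2-p*s+q)) = (1+s^2)^2 + x*(s^2+2*t+1)^2 := by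
    intro s
    have e1 : α*p^2 = 2*α*q - β := by rw [hp2]; field_simp
    simp only [hαd, hβd, hγd] at e1 hq2 ⊢
    linear_combination (-(s^2))*e1 + hq2
  have hIoi' : (∫ u in Set.Ioi (0:ℝ), g u) = (2/α)*((1+q)/(2*q*r)*Real.pi) := by
    rw [← hIoi]
    refine MeasureTheory.setIntegral_congr_fun measurableSet_Ioi (fun s _ => ?_)
    rw [hgd]
    simp only
    rw [← hαuv s, div_eq_div_iff (mul_pos hα (mul_pos (hu s) (hv s))).ne' (mul_pos (hu s) (hv s)).ne']
    field_simp

  have hIoo : (∫ k in (0:ℝ)..Real.pi, f k) = ∫ k in Set.Ioo 0 Real.pi, f k := by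
    rw [intervalIntegral.integral_of_le Real.pi_pos.le, MeasureTheory.integral_Ioc_eq_integral_Ioo]
  have hval : (∫ k in (0:ℝ)..(2*Real.pi), f k) = 2*((2/α)*((1+q)/(2*q*r)*Real.pi)) := by
    rw [hsplit, hIoo, hsubst, hIoi']
  rw [hval]
  -- final algebra
  have hsa : 0 < Real.sqrt α := Real.sqrt_pos.2 hα
  have hsg : 0 < Real.sqrt γ := Real.sqrt_pos.2 hγ
  have hsa2 : Real.sqrt α * Real.sqrt α = α := Real.mul_self_sqrt hα.le
  have hqq : q = Real.sqrt γ / Real.sqrt α := by rw [hqd, Real.sqrt_div hγ.le]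
  have hD : (0:ℝ) < (2*t+1)*x + 1 := by
    have := mul_pos (show (0:ℝ) < 2*t+1 by linarith) hx
    linarith
  have hwin : (0:ℝ) < Real.sqrt α * Real.sqrt γ + (2*t+1)*x + 1 := by positivity
  have hw0 : 0 < Real.sqrt (Real.sqrt α * Real.sqrt γ + (2*t+1)*x + 1) := Real.sqrt_pos.2 hwin
  have h20 : 0 < Real.sqrt 2 := Real.sqrt_pos.2 (by norm_num)
  have hπ := Real.pi_pos
  have hrr : r = Real.sqrt 2 * Real.sqrt (Real.sqrt α * Real.sqrt γ + (2*t+1)*x + 1) / Real.sqrt α := by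
    rw [hrd]
    have hin : 2*q + β/α = 2*(Real.sqrt α * Real.sqrt γ + (2*t+1)*x + 1)/α := by
      have hsa2' : Real.sqrt α * Real.sqrt α = x + 1 := hsa2.trans hαd
      rw [hqq, hβd]
      field_simp
      linear_combination (-Real.sqrt γ) * hsa2
    rw [hin, Real.sqrt_div (by positivity) α, Real.sqrt_mul (by norm_num)]
  rw [hqq, hrr]
  field_simp
  ring_nf
  linear_combination (Real.sqrt γ + Real.sqrt α) * hsa2


/-- For x ≥ 0 and t ≥ 0,
(1/(2π)) ∫₀^{2π} dk /(1 + x(t(cos k + 1) + 1)²)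
 = (√((2t+1)²x+1) + √(x+1)) / (√2 √(x+1) √((2t+1)²x+1) √(√(x+1)√((2t+1)²x+1)+(2t+1)x+1)). -/
theorem stmt_4 (x t : ℝ) (hx : 0 ≤ x) (ht : 0 ≤ t) :
    (1 / (2 * Real.pi)) * ∫ k in (0 : ℝ)..(2 * Real.pi),
        1 / (1 + x * (t * (Real.cos k + 1) + 1) ^ 2)
      = (Real.sqrt ((2 * t + 1) ^ 2 * x + 1) + Real.sqrt (x + 1)) /
        (Real.sqrt 2 * Real.sqrt (x + 1) * Real.sqrt ((2 * t + 1) ^ 2 * x + 1) *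
          Real.sqrt (Real.sqrt (x + 1) * Real.sqrt ((2 * t + 1) ^ 2 * x + 1)
            + (2 * t + 1) * x + 1)) := by
  rcases eq_or_lt_of_le hx with hx0 | hx0
  · subst hx0
    have h2 : Real.sqrt 2 * Real.sqrt 2 = 2 := Real.mul_self_sqrt (by norm_num)
    simp only [zero_mul, mul_zero, zero_add, add_zero, one_pow, mul_one, Real.sqrt_one]
    rw [intervalIntegral.integral_const]
    field_simp
    rw [show (1:ℝ)+1 = 2 by norm_num, mul_assoc, h2]
    simp
  rcases eq_or_lt_of_le ht with ht0 | ht0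
  · subst ht0
    have hx1 : (0:ℝ) < x + 1 := by linarith
    have ha : Real.sqrt (x+1) * Real.sqrt (x+1) = x + 1 := Real.mul_self_sqrt hx1.le
    have ha0 : 0 < Real.sqrt (x+1) := Real.sqrt_pos.2 hx1
    have h2 : Real.sqrt 2 * Real.sqrt 2 = 2 := Real.mul_self_sqrt (by norm_num)
    have h20 : 0 < Real.sqrt 2 := Real.sqrt_pos.2 (by norm_num)
    simp only [zero_mul, zero_add, mul_zero, one_pow, one_mul, mul_one]
    rw [intervalIntegral.integral_const]
    have hb : Real.sqrt (Real.sqrt (x+1) * Real.sqrt (x+1) + x + 1)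
        = Real.sqrt 2 * Real.sqrt (x+1) := by
      rw [ha, show x + 1 + x + 1 = 2 * (x+1) by ring, Real.sqrt_mul (by norm_num)]
    rw [hb]
    have hpi := Real.pi_pos
    field_simp
    rw [smul_eq_mul, sub_zero, Real.sq_sqrt hx1.le, Real.sq_sqrt (by norm_num : (0:ℝ) ≤ 2)]
    field_simp
    ring
  · exact main_case x t hx0 ht0
end

section
/- Let e₂, e₁ be real numbers with 0 < e₂ < e₁, and set z = e₂/e₁, η₀ = 17 - 12√2, a₀ = 3 + 2√2. Define v(x) = 3z²(1 - z²)·((x²/2 - (1+z²)/(6z²))² + (-z⁴ + 34z² - 1)/(36z⁴)). If z² > η₀, then for all x ∈ ℝ, v(x) ≥ (1 - z)·(z² - η₀) > 0. -/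
/-- For 0 < e₂ < e₁, z = e₂/e₁, η₀ = 17 - 12√2: if z² > η₀ then
v(x) = 3z²(1-z²)((x²/2 - (1+z²)/(6z²))² + (-z⁴+34z²-1)/(36z⁴)) satisfies
v(x) ≥ (1-z)(z²-η₀) > 0 for all x. -/
theorem stmt_9 (e₁ e₂ : ℝ) (h2 : 0 < e₂) (h12 : e₂ < e₁)
    (hz : 17 - 12 * Real.sqrt 2 < (e₂ / e₁) ^ 2) :
    (∀ x : ℝ,
      3 * (e₂ / e₁) ^ 2 * (1 - (e₂ / e₁) ^ 2) *
          ((x ^ 2 / 2 - (1 + (e₂ / e₁) ^ 2) / (6 * (e₂ / e₁) ^ 2)) ^ 2 +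
            (-(e₂ / e₁) ^ 4 + 34 * (e₂ / e₁) ^ 2 - 1) / (36 * (e₂ / e₁) ^ 4))
        ≥ (1 - e₂ / e₁) * ((e₂ / e₁) ^ 2 - (17 - 12 * Real.sqrt 2))) ∧
      0 < (1 - e₂ / e₁) * ((e₂ / e₁) ^ 2 - (17 - 12 * Real.sqrt 2)) := by
  set z : ℝ := e₂ / e₁ with hzdef
  have he1 : (0:ℝ) < e₁ := lt_trans h2 h12
  have hz0 : 0 < z := div_pos h2 he1
  have hz1 : z < 1 := (div_lt_one he1).mpr h12
  have hs : Real.sqrt 2 ^ 2 = 2 := Real.sq_sqrt (by norm_num)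
  have hs1 : (1:ℝ) < Real.sqrt 2 := by
    nlinarith [Real.sqrt_nonneg 2]
  have hpos : 0 < (1 - z) * (z ^ 2 - (17 - 12 * Real.sqrt 2)) := by
    apply mul_pos (by linarith) (by linarith)
  refine ⟨fun x => ?_, hpos⟩
  have hmin : 3 * z ^ 2 * (1 - z ^ 2) *
      ((-z ^ 4 + 34 * z ^ 2 - 1) / (36 * z ^ 4))
      ≥ (1 - z) * (z ^ 2 - (17 - 12 * Real.sqrt 2)) := by
    rw [ge_iff_le, ← mul_div_assoc, le_div_iff₀ (by positivity)]
    have key : 12 * z ^ 2 ≤ (1 + z) * ((17 + 12 * Real.sqrt 2) - z ^ 2) := by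
      nlinarith
    have hA : 0 ≤ 3 * z ^ 2 * (1 - z) * (z ^ 2 - (17 - 12 * Real.sqrt 2)) := by
      apply mul_nonneg (mul_nonneg (by positivity) (by linarith)) (by linarith)
    have h3 := mul_le_mul_of_nonneg_left key hA
    have hAB : (z ^ 2 - (17 - 12 * Real.sqrt 2)) * ((17 + 12 * Real.sqrt 2) - z ^ 2)
        = -z ^ 4 + 34 * z ^ 2 - 1 := by linear_combination 144 * hs
    calc (1 - z) * (z ^ 2 - (17 - 12 * Real.sqrt 2)) * (36 * z ^ 4)
        = 3 * z ^ 2 * (1 - z) * (z ^ 2 - (17 - 12 * Real.sqrt 2)) * (12 * z ^ 2) := by ring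
      _ ≤ 3 * z ^ 2 * (1 - z) * (z ^ 2 - (17 - 12 * Real.sqrt 2)) *
            ((1 + z) * ((17 + 12 * Real.sqrt 2) - z ^ 2)) := h3
      _ = 3 * z ^ 2 * (1 - z ^ 2) *
            ((z ^ 2 - (17 - 12 * Real.sqrt 2)) * ((17 + 12 * Real.sqrt 2) - z ^ 2)) := by ring
      _ = 3 * z ^ 2 * (1 - z ^ 2) * (-z ^ 4 + 34 * z ^ 2 - 1) := by rw [hAB]
  have hsq : 0 ≤ 3 * z ^ 2 * (1 - z ^ 2) *
      (x ^ 2 / 2 - (1 + z ^ 2) / (6 * z ^ 2)) ^ 2 := by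
    apply mul_nonneg
    · nlinarith [mul_pos (mul_pos hz0 hz0) (show (0:ℝ) < 1 - z ^ 2 by nlinarith)]
    · exact sq_nonneg _
  calc 3 * z ^ 2 * (1 - z ^ 2) *
        ((x ^ 2 / 2 - (1 + z ^ 2) / (6 * z ^ 2)) ^ 2 +
          (-z ^ 4 + 34 * z ^ 2 - 1) / (36 * z ^ 4))
      = 3 * z ^ 2 * (1 - z ^ 2) * (x ^ 2 / 2 - (1 + z ^ 2) / (6 * z ^ 2)) ^ 2
        + 3 * z ^ 2 * (1 - z ^ 2) * ((-z ^ 4 + 34 * z ^ 2 - 1) / (36 * z ^ 4)) := by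
        ring
    _ ≥ (1 - z) * (z ^ 2 - (17 - 12 * Real.sqrt 2)) := by linarith
end

section
/- Let e_min > 0, b ≥ 1 an integer, U < 0 with |U| < 2·e_min/b, and suppose β_c > 0 satisfies 0 ≤ -2/|U| + b/(tanh(β_c·e_min/2)·e_min). Then β_c ≤ (2/e_min)·tanh⁻¹(b·|U|/(2·e_min)). -/
lemma tanh_formula (x : ℝ) : Real.tanh x = 1 - 2 / (Real.exp (2*x) + 1) := by
  rw [Real.tanh_eq_sinh_div_cosh, Real.sinh_eq, Real.cosh_eq]
  have h1 : Real.exp x > 0 := Real.exp_pos x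
  have h2 : Real.exp (-x) > 0 := Real.exp_pos _
  have h3 : Real.exp (2*x) = Real.exp x * Real.exp x := by
    rw [← Real.exp_add]; ring_nf
  have h4 : Real.exp x * Real.exp (-x) = 1 := by
    rw [← Real.exp_add]; simp
  rw [h3]
  field_simp
  nlinarith [h4]

lemma tanh_strictMono : StrictMono Real.tanh := by
  intro x y hxy
  rw [tanh_formula, tanh_formula]
  have h1 : (0:ℝ) < Real.exp (2*x) + 1 := by positivity
  have h2 : (0:ℝ) < Real.exp (2*y) + 1 := by positivity
  have h3 : Real.exp (2*x) < Real.exp (2*y) := by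
    apply Real.exp_lt_exp.2; linarith
  have h4 : 2 / (Real.exp (2*y) + 1) < 2 / (Real.exp (2*x) + 1) := by
    apply div_lt_div_of_pos_left (by norm_num) h1 (by linarith)
  linarith

/-- With tanh⁻¹ the inverse hyperbolic tangent on (-1,1): if e_min > 0, b ≥ 1,
U < 0 with |U| < 2e_min/b, and β_c > 0 satisfies
0 ≤ -2/|U| + b/(tanh(β_c e_min/2) e_min), then β_c ≤ (2/e_min) tanh⁻¹(b|U|/(2e_min)). -/
theorem stmt_14 (artanh : ℝ → ℝ)
    (hartanh : ∀ x ∈ Set.Ioo (-1 : ℝ) 1, Real.tanh (artanh x) = x)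
    (emin : ℝ) (he : 0 < emin) (b : ℕ) (hb : 1 ≤ b) (U : ℝ) (hU : U < 0)
    (hUe : |U| < 2 * emin / b) (βc : ℝ) (hβc : 0 < βc)
    (h : 0 ≤ -2 / |U| + (b : ℝ) / (Real.tanh (βc * emin / 2) * emin)) :
    βc ≤ (2 / emin) * artanh ((b : ℝ) * |U| / (2 * emin)) := by
  have hUpos : 0 < |U| := abs_pos.2 (ne_of_lt hU)
  have hbpos : (0:ℝ) < b := by exact_mod_cast Nat.lt_of_lt_of_le Nat.zero_lt_one hb
  set t := βc * emin / 2 with ht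
  have htpos : 0 < t := by positivity
  have htanhpos : 0 < Real.tanh t := by
    have := tanh_strictMono htpos
    simpa [Real.tanh_zero] using this
  set x := (b : ℝ) * |U| / (2 * emin) with hx
  have hx0 : 0 < x := by positivity
  have hx1 : x < 1 := by
    rw [hx, div_lt_one (by positivity)]
    calc (b:ℝ) * |U| < (b:ℝ) * (2 * emin / b) := by
          exact mul_lt_mul_of_pos_left hUe hbpos
      _ = 2 * emin := by field_simp
  have hmem : x ∈ Set.Ioo (-1 : ℝ) 1 := ⟨by linarith, hx1⟩
  have htanhx : Real.tanh (artanh x) = x := hartanh x hmem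
  -- from h: tanh t ≤ x
  have key : Real.tanh t ≤ x := by
    have h2 : 2 / |U| ≤ (b : ℝ) / (Real.tanh t * emin) := by
      rw [neg_div] at h; linarith
    rw [div_le_div_iff₀ hUpos (by positivity)] at h2
    rw [hx, le_div_iff₀ (by positivity)]
    nlinarith
  have : t ≤ artanh x := by
    by_contra hlt
    push_neg at hlt
    have := tanh_strictMono hlt
    rw [htanhx] at this
    linarith
  rw [ht] at this
  calc βc = (2/emin) * (βc * emin / 2) := by field_simp
    _ ≤ (2/emin) * artanh x := by
        apply mul_le_mul_of_nonneg_left this (by positivity)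
end

section
/- Let 0 < e_min ≤ e_max, 0 < β ≤ 2/e_min, and y ∈ ℝ with y + cosh(β·e_min) > 0. Then y + cosh(β·e_max) ≤ 2·(e_max/e_min)²·cosh(2·e_max/e_min)·(y + cosh(β·e_min)). -/
private lemma aux_sinh_le_mul_cosh {x : ℝ} (hx : 0 ≤ x) : Real.sinh x ≤ x * Real.cosh x := by
  have mono : MonotoneOn (fun t => t * Real.cosh t - Real.sinh t) (Set.Ici 0) := by
    apply monotoneOn_of_deriv_nonneg (convex_Ici 0)
    · fun_prop
    · fun_prop
    · intro t ht
      rw [interior_Ici] at ht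
      have hd : HasDerivAt (fun t => t * Real.cosh t - Real.sinh t)
          (1 * Real.cosh t + t * Real.sinh t - Real.cosh t) t :=
        ((hasDerivAt_id t).mul (Real.hasDerivAt_cosh t)).sub (Real.hasDerivAt_sinh t)
      rw [hd.deriv]
      have ht' : (0:ℝ) < t := ht
      have := Real.sinh_nonneg_iff.2 ht'.le
      nlinarith
  have h := mono (Set.self_mem_Ici) (Set.mem_Ici.2 hx) hx
  simp only [Real.sinh_zero, Real.cosh_zero] at h
  linarith

private lemma aux_cosh_sub_one_le {x : ℝ} (hx : 0 ≤ x) :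
    Real.cosh x - 1 ≤ x * Real.sinh x := by
  have mono : MonotoneOn (fun t => t * Real.sinh t - Real.cosh t) (Set.Ici 0) := by
    apply monotoneOn_of_deriv_nonneg (convex_Ici 0)
    · fun_prop
    · fun_prop
    · intro t ht
      rw [interior_Ici] at ht
      have hd : HasDerivAt (fun t => t * Real.sinh t - Real.cosh t)
          (1 * Real.sinh t + t * Real.cosh t - Real.sinh t) t :=
        ((hasDerivAt_id t).mul (Real.hasDerivAt_sinh t)).sub (Real.hasDerivAt_cosh t)
      rw [hd.deriv]
      have ht' : (0:ℝ) < t := ht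
      have := Real.cosh_pos (x := t)
      nlinarith
  have h := mono (Set.self_mem_Ici) (Set.mem_Ici.2 hx) hx
  simp only [Real.sinh_zero, Real.cosh_zero] at h
  linarith

private lemma aux_sq_le_cosh {x : ℝ} (hx : 0 ≤ x) : 1 + x ^ 2 / 2 ≤ Real.cosh x := by
  have h2 : Real.cosh x = 2 * Real.sinh (x / 2) ^ 2 + 1 := by
    have := Real.cosh_sq (x / 2)
    have hc := Real.cosh_two_mul (x / 2)
    rw [show 2 * (x / 2) = x by ring] at hc
    nlinarith
  have hs : x / 2 ≤ Real.sinh (x / 2) := by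
    rcases eq_or_lt_of_le hx with h | h
    · simp [← h]
    · exact (Real.self_lt_sinh_iff.2 (by linarith)).le
  nlinarith [Real.sinh_nonneg_iff.2 (by linarith : (0:ℝ) ≤ x / 2)]

/-- For 0 < e_min ≤ e_max, 0 < β ≤ 2/e_min, and y ≥ -1 with y + cosh(β e_min) > 0:
y + cosh(β e_max) ≤ 2(e_max/e_min)² cosh(2 e_max/e_min)(y + cosh(β e_min)). -/
theorem stmt_16 (emin emax β y : ℝ) (h1 : 0 < emin) (h2 : emin ≤ emax)
    (h3 : 0 < β) (h4 : β ≤ 2 / emin) (hy : -1 ≤ y)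
    (hy' : 0 < y + Real.cosh (β * emin)) :
    y + Real.cosh (β * emax) ≤
      2 * (emax / emin) ^ 2 * Real.cosh (2 * emax / emin) * (y + Real.cosh (β * emin)) := by
  have hemax : 0 < emax := lt_of_lt_of_le h1 h2
  have hbM : 0 ≤ β * emax := mul_nonneg h3.le hemax.le
  have hbm : 0 ≤ β * emin := mul_nonneg h3.le h1.le
  -- β * emax ≤ 2 * emax / emin
  have hle : β * emax ≤ 2 * emax / emin := by
    have h := mul_le_mul_of_nonneg_right h4 hemax.le
    calc β * emax ≤ 2 / emin * emax := h
      _ = 2 * emax / emin := by ring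
  have hcosh_mono : Real.cosh (β * emax) ≤ Real.cosh (2 * emax / emin) := by
    rw [Real.cosh_le_cosh]
    rw [abs_of_nonneg hbM, abs_of_nonneg (by positivity : (0:ℝ) ≤ 2 * emax / emin)]
    exact hle
  -- cosh(β emax) - 1 ≤ (β emax)^2 cosh(2 emax/emin)
  have step1 : Real.cosh (β * emax) - 1 ≤ (β * emax) ^ 2 * Real.cosh (2 * emax / emin) := by
    have ha := aux_cosh_sub_one_le hbM
    have hb := aux_sinh_le_mul_cosh hbM
    nlinarith [Real.cosh_pos (x := β * emax)]
  -- (β emin)^2 / 2 ≤ cosh(β emin) - 1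
  have step2 : (β * emin) ^ 2 / 2 ≤ Real.cosh (β * emin) - 1 := by
    have := aux_sq_le_cosh hbm
    linarith
  set C := 2 * (emax / emin) ^ 2 * Real.cosh (2 * emax / emin) with hC
  have hC2 : 2 ≤ C := by
    have h1' : 1 ≤ (emax / emin) ^ 2 := by
      have : 1 ≤ emax / emin := (one_le_div h1).2 h2
      nlinarith
    have := Real.one_le_cosh (2 * emax / emin)
    nlinarith
  -- key: cosh(β emax) - 1 ≤ C * (cosh(β emin) - 1)
  have key : Real.cosh (β * emax) - 1 ≤ C * (Real.cosh (β * emin) - 1) := by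
    have hsq : (β * emax) ^ 2 = (emax / emin) ^ 2 * (β * emin) ^ 2 := by
      field_simp
    have hCnn : 0 ≤ 2 * (emax / emin) ^ 2 * Real.cosh (2 * emax / emin) := by
      positivity
    calc Real.cosh (β * emax) - 1 ≤ (β * emax) ^ 2 * Real.cosh (2 * emax / emin) := step1
      _ = 2 * (emax / emin) ^ 2 * Real.cosh (2 * emax / emin) * ((β * emin) ^ 2 / 2) := by
          rw [hsq]; ring
      _ ≤ C * (Real.cosh (β * emin) - 1) := by
          rw [hC]
          exact mul_le_mul_of_nonneg_left step2 hCnn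
  have hy1 : 0 ≤ y + 1 := by linarith
  nlinarith [mul_le_mul_of_nonneg_right (by linarith : (1:ℝ) ≤ C) hy1]
end

section
/- Let h > 0, β > 0 with h·β/2 ∈ ℕ (h = 2m/β for some positive integer m), and let z ∈ ℂ with |z| = π·h. Then |1 + e^{βz}| ≥ 1 - e^{-π/2}. -/
set_option maxHeartbeats 1000000 in
/-- For h, β > 0 with hβ/2 a positive integer and z ∈ ℂ with |z| = πh:
|1 + e^{βz}| ≥ 1 - e^{-π/2}. -/
theorem stmt_19 (h β : ℝ) (hh : 0 < h) (hβ : 0 < β)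
    (hm : ∃ m : ℕ, 0 < m ∧ h = 2 * (m : ℝ) / β)
    (z : ℂ) (hz : ‖z‖ = Real.pi * h) :
    1 - Real.exp (-Real.pi / 2) ≤ ‖1 + Complex.exp ((β : ℂ) * z)‖ := by
  obtain ⟨m, hm0, hhm⟩ := hm
  have hπ := Real.pi_pos
  have hπ3 := Real.pi_gt_three
  have hexp_pos := (Real.exp_pos (-Real.pi / 2)).le
  have hm1 : (1 : ℝ) ≤ m := by exact_mod_cast hm0
  set x := z.re with hx
  set y := z.im with hy
  have hβh : β * h = 2 * m := by
    rw [hhm]; field_simp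
  have h1 : x ^ 2 + y ^ 2 = (Real.pi * h) ^ 2 := by
    have := Complex.sq_norm z
    rw [hz] at this
    rw [Complex.normSq_apply] at this
    nlinarith [this]
  have hsum : (β * x) ^ 2 + (β * y) ^ 2 = (2 * Real.pi * m) ^ 2 := by
    have e1 : (β * x) ^ 2 + (β * y) ^ 2 = β ^ 2 * (x ^ 2 + y ^ 2) := by ring
    rw [e1, h1]
    calc β ^ 2 * (Real.pi * h) ^ 2 = Real.pi ^ 2 * (β * h) ^ 2 := by ring
      _ = (2 * Real.pi * m) ^ 2 := by rw [hβh]; ring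
  set w := Complex.exp ((β : ℂ) * z) with hw
  have hre : ((β : ℂ) * z).re = β * x := by simp [hx]
  have him : ((β : ℂ) * z).im = β * y := by simp [hy]
  have habsw : ‖w‖ = Real.exp (β * x) := by
    rw [hw, Complex.norm_exp, hre]
  have hwre : w.re = Real.exp (β * x) * Real.cos (β * y) := by
    rw [hw, Complex.exp_re, hre, him]
  have hwim : w.im = Real.exp (β * x) * Real.sin (β * y) := by
    rw [hw, Complex.exp_im, hre, him]
  have hexp_neg : Real.exp (-Real.pi / 2) < 1 := by
    rw [Real.exp_lt_one_iff]; linarith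
  rcases le_or_gt (β * x) (-(Real.pi / 2)) with hc | hc
  · -- |w| small
    have htri : ‖(1 : ℂ)‖ ≤ ‖1 + w‖ + ‖-w‖ := by
      have := norm_add_le (1 + w) (-w)
      simpa using this
    have h2 : ‖w‖ ≤ Real.exp (-Real.pi / 2) := by
      rw [habsw]
      exact Real.exp_le_exp.mpr (by linarith)
    simp only [norm_one, norm_neg] at htri
    linarith
  rcases le_or_gt (Real.pi / 2) (β * x) with hc2 | hc2
  · -- |w| large
    have htri : ‖w‖ ≤ ‖1 + w‖ + 1 := by
      have := norm_add_le (1 + w) (-1)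
      simpa using this
    have h2 : (2 : ℝ) ≤ Real.exp (Real.pi / 2) := by
      have := Real.add_one_le_exp (Real.pi / 2)
      linarith
    have h3 : (2 : ℝ) ≤ ‖w‖ := by
      rw [habsw]
      exact le_trans h2 (Real.exp_le_exp.mpr hc2)
    linarith
  · -- middle case: cos(βy) ≥ 0, so |1+w|² ≥ 1
    have hcos : 0 ≤ Real.cos (β * y) := by
      set u := β * y with hu
      have hu2upper : u ^ 2 ≤ (2 * Real.pi * m) ^ 2 := by nlinarith [sq_nonneg (β * x)]
      have hu2lower : (2 * Real.pi * m - Real.pi / 2) ^ 2 ≤ u ^ 2 := by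
        have hx2 : (β * x) ^ 2 < (Real.pi / 2) ^ 2 := by
          have := sq_lt_sq' hc hc2
          simpa using this
        have hmm : 0 ≤ Real.pi * Real.pi * ((m : ℝ) - 1) :=
          mul_nonneg (mul_pos hπ hπ).le (by linarith)
        nlinarith [hsum]
      have hpm : (0 : ℝ) < Real.pi * m := by positivity
      have habsu1 : |u| ≤ 2 * Real.pi * m := by
        nlinarith [sq_abs u, abs_nonneg u, hu2upper]
      have habsu2 : 2 * Real.pi * m - Real.pi / 2 ≤ |u| := by
        nlinarith [sq_abs u, abs_nonneg u, hu2lower]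
      have habsu : |u| ≤ 2 * Real.pi * m ∧ 2 * Real.pi * m - Real.pi / 2 ≤ |u| :=
        ⟨habsu1, habsu2⟩
      have : Real.cos u = Real.cos (|u| - (m : ℤ) * (2 * Real.pi)) := by
        rw [Real.cos_sub_int_mul_two_pi, Real.cos_abs]
      rw [this]
      apply Real.cos_nonneg_of_mem_Icc
      constructor
      · push_cast; linarith [habsu.2]
      · push_cast; linarith [habsu.1]
    have hsq : ‖1 + w‖ ^ 2 =
        1 + 2 * w.re + Real.exp (β * x) ^ 2 := by
      rw [Complex.sq_norm, Complex.normSq_apply]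
      simp only [Complex.add_re, Complex.add_im, Complex.one_re, Complex.one_im]
      rw [hwre, hwim]
      nlinarith [Real.sin_sq_add_cos_sq (β * y)]
    have hre_nonneg : 0 ≤ w.re := by
      rw [hwre]
      exact mul_nonneg (Real.exp_pos _).le hcos
    have h1le : (1 : ℝ) ≤ ‖1 + w‖ := by
      nlinarith [norm_nonneg (1 + w), sq_nonneg (Real.exp (β * x)), hsq]
    linarith
end
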